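/- Let k ≥ 1 and σ(i) = 2i mod 3^k on {1, …, 3^k − 1}. The sets O_s = {m ∈ {1,…,3^k−1} : 3^s ∣ m and 3^(s+1) ∤ m} for s = 0, …, k−1 partition {1, …, 3^k − 1}, and each O_s is a single orbit of σ. -/

import Mathlib

lemma key_lemma : ∀ j : ℕ, ∃ c : ℕ, c % 3 = 1 ∧ 2 ^ (2 * 3 ^ j) = 1 + 3 ^ (j+1) * c := by
  intro j
  induction j with
  | zero => exact ⟨1, by norm_num⟩
  | succ j ih =>
    obtain ⟨c, hc1, hc2⟩ := ih
    refine ⟨c + 3^(j+1) * c^2 + 3^(2*j+1) * c^3, ?_, ?_⟩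
    · obtain ⟨a, ha⟩ : (3:ℕ) ∣ 3^(j+1) * c^2 + 3^(2*j+1) * c^3 :=
        dvd_add ((dvd_pow_self 3 (Nat.succ_ne_zero j)).mul_right _)
          ((dvd_pow_self 3 (by omega : 2*j+1 ≠ 0)).mul_right _)
      rw [add_assoc, ha]
      omega
    · have h1 : 2 * 3 ^ (j+1) = (2 * 3 ^ j) * 3 := by ring
      rw [h1, pow_mul, hc2]
      ring

lemma one_add_mul_pow (x : ℤ) : ∀ i : ℕ, x^2 ∣ (1+x)^i - (1 + i*x) := by
  intro i
  induction i with
  | zero => simp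
  | succ i ih =>
    have h : (1+x)^(i+1) - (1 + (i+1:ℕ)*x)
        = (1+x)*((1+x)^i - (1 + i*x)) + i*x^2 := by push_cast; ring
    rw [h]
    exact dvd_add (ih.mul_left _) (Dvd.intro_left _ rfl)

lemma choose_i (a d : ℤ) (ha : ¬ (3:ℤ) ∣ a) : ∃ i : ℕ, (3:ℤ) ∣ d - a * (i:ℕ) := by
  have ha3 : a % 3 = 1 ∨ a % 3 = 2 := by omega
  have hd3 : d % 3 = 0 ∨ d % 3 = 1 ∨ d % 3 = 2 := by omega
  rcases ha3 with h1 | h1 <;> rcases hd3 with h2 | h2 | h2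
  · exact ⟨0, by push_cast; omega⟩
  · exact ⟨1, by push_cast; omega⟩
  · exact ⟨2, by push_cast; omega⟩
  · exact ⟨0, by push_cast; omega⟩
  · exact ⟨2, by push_cast; omega⟩
  · exact ⟨1, by push_cast; omega⟩

lemma surj_lemma : ∀ j : ℕ, 1 ≤ j → ∀ u : ℕ, u % 3 ≠ 0 →
    ∃ t : ℕ, (3:ℤ)^j ∣ (u:ℤ) - 2^t := by
  intro j hj
  induction j, hj using Nat.le_induction with
  | base =>
    intro u hu
    have h : u % 3 = 1 ∨ u % 3 = 2 := by omega
    rcases h with h | h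
    · exact ⟨0, by push_cast; omega⟩
    · exact ⟨1, by push_cast; omega⟩
  | succ j hj ih =>
    intro u hu
    obtain ⟨t, d, hd⟩ := ih u hu
    obtain ⟨c, hc1, hc2⟩ := key_lemma (j-1)
    have hj1 : j - 1 + 1 = j := by omega
    rw [hj1] at hc2
    have hc2' : (2:ℤ)^(2 * 3^(j-1)) = 1 + 3^j * c := by exact_mod_cast hc2
    have hna : ¬ (3:ℤ) ∣ (2:ℤ)^t * (c:ℤ) := by
      intro h
      have h3 : Prime (3:ℤ) := by norm_num
      rcases h3.dvd_mul.mp h with h | h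
      · have := h3.dvd_of_dvd_pow h
        omega
      · have : ((3:ℕ):ℤ) ∣ (c:ℤ) := by exact_mod_cast h
        have : (3:ℕ) ∣ c := by exact_mod_cast this
        omega
    obtain ⟨i, hi⟩ := choose_i ((2:ℤ)^t * c) d hna
    refine ⟨t + (2 * 3^(j-1)) * i, ?_⟩
    have hx : (u:ℤ) - 2^(t + (2 * 3^(j-1)) * i)
        = ((u:ℤ) - 2^t) - 2^t * i * (3^j * c)
          - 2^t * ((1 + 3^j*c)^i - (1 + i*(3^j*c))) := by
      rw [pow_add, pow_mul, hc2']; ring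
    rw [hx]
    refine dvd_sub ?_ ?_
    · have he : (u:ℤ) - 2^t - 2^t * i * (3^j * c) = 3^j * (d - 2^t * c * i) := by
        rw [hd]; ring
      rw [he, pow_succ]
      exact mul_dvd_mul dvd_rfl hi
    · have h1 : ((3:ℤ)^j * c)^2 ∣ (1 + 3^j*c)^i - (1 + i*(3^j*c)) := one_add_mul_pow _ i
      have h2 : (3:ℤ)^(j+1) ∣ ((3:ℤ)^j * c)^2 := by
        have : ((3:ℤ)^j * c)^2 = 3^(2*j) * c^2 := by ring
        rw [this]
        exact (pow_dvd_pow 3 (by omega)).mul_right _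
      exact (h2.trans h1).mul_left _


/-- For k ≥ 1 and σ(i) = 2i mod 3^k on {1,…,3^k−1}, the sets
O_s = {m : 3^s ∣ m, 3^(s+1) ∤ m} for s < k partition {1,…,3^k−1},
and each O_s is a single orbit of σ (the orbit of 3^s). -/
theorem in_shuffle_orbit_partition (k : ℕ) (hk : 1 ≤ k) :
    (∀ m : ℕ, 1 ≤ m → m ≤ 3 ^ k - 1 →
        ∃! s : ℕ, s < k ∧ 3 ^ s ∣ m ∧ ¬ 3 ^ (s + 1) ∣ m) ∧
    (∀ s : ℕ, s < k → ∀ m : ℕ, 1 ≤ m → m ≤ 3 ^ k - 1 →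
        ((3 ^ s ∣ m ∧ ¬ 3 ^ (s + 1) ∣ m) ↔ ∃ t : ℕ, 2 ^ t * 3 ^ s % 3 ^ k = m)) := by
  have p3 : Nat.Prime 3 := by norm_num
  have h3k : 1 ≤ 3 ^ k := Nat.one_le_pow _ _ (by norm_num)
  constructor
  · intro m hm1 hm2
    have hm0 : m ≠ 0 := by omega
    have hmlt : m < 3 ^ k := by omega
    set v := m.factorization 3 with hv
    have hdvd : 3 ^ v ∣ m := (p3.pow_dvd_iff_le_factorization hm0).mpr le_rfl
    have hndvd : ¬ 3 ^ (v+1) ∣ m := fun h => by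
      have := (p3.pow_dvd_iff_le_factorization hm0).mp h; omega
    have hvk : v < k := by
      have h1 : 3 ^ v ≤ m := Nat.le_of_dvd (by omega) hdvd
      have h2 : 3 ^ v < 3 ^ k := lt_of_le_of_lt h1 hmlt
      exact (Nat.pow_lt_pow_iff_right (by norm_num)).mp h2
    refine ⟨v, ⟨hvk, hdvd, hndvd⟩, ?_⟩
    rintro s ⟨hsk, hs1, hs2⟩
    have e1 : s ≤ v := (p3.pow_dvd_iff_le_factorization hm0).mp hs1
    have e2 : ¬ (s + 1 ≤ v) := fun h =>
      hs2 ((p3.pow_dvd_iff_le_factorization hm0).mpr h)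
    omega
  · intro s hsk m hm1 hm2
    have hm0 : m ≠ 0 := by omega
    have hmlt : m < 3 ^ k := by omega
    constructor
    · rintro ⟨hs1, hs2⟩
      obtain ⟨u, hu⟩ := hs1
      have hu3 : u % 3 ≠ 0 := by
        intro h
        obtain ⟨w, hw⟩ : 3 ∣ u := by omega
        exact hs2 ⟨w, by rw [hu, hw, pow_succ]; ring⟩
      obtain ⟨t, hdvd⟩ := surj_lemma (k - s) (by omega) u hu3
      refine ⟨t, ?_⟩
      have hmod : (2 ^ t * 3 ^ s) % 3 ^ k = m % 3 ^ k := by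
        have : ((3:ℕ)^k : ℤ) ∣ (m:ℤ) - (2 ^ t * 3 ^ s : ℕ) := by
          push_cast
          have hk' : (3:ℤ) ^ k = 3 ^ s * 3 ^ (k - s) := by
            rw [← pow_add]; congr 1; omega
          rw [hk']
          have : (m:ℤ) - 2 ^ t * 3 ^ s = 3 ^ s * ((u:ℤ) - 2 ^ t) := by
            have : (m:ℤ) = 3 ^ s * u := by exact_mod_cast hu
            rw [this]; ring
          rw [this]
          exact mul_dvd_mul_left _ hdvd
        exact Nat.modEq_iff_dvd.mpr (by push_cast; exact_mod_cast this)
      rw [hmod, Nat.mod_eq_of_lt hmlt]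
    · rintro ⟨t, ht⟩
      have hsk' : 3 ^ s ∣ 3 ^ k := pow_dvd_pow 3 (le_of_lt hsk)
      have hsk1 : 3 ^ (s+1) ∣ 3 ^ k := pow_dvd_pow 3 hsk
      constructor
      · rw [← ht, Nat.dvd_mod_iff hsk']
        exact dvd_mul_left _ _
      · rw [← ht, Nat.dvd_mod_iff hsk1]
        intro h
        have h2 : 3 ^ s * 3 ∣ 3 ^ s * 2 ^ t := by
          rw [← pow_succ]; rwa [mul_comm (2^t)] at h
        have h3 : (3:ℕ) ∣ 2 ^ t :=
          (Nat.mul_dvd_mul_iff_left (Nat.pow_pos (n := s) (by norm_num))).mp h2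
        have := p3.dvd_of_dvd_pow h3
        omega
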